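/- Let V be a finite vector space of order p^n over GF(p), let H ≤ Γ(V) be a group of semilinear maps on V, and let T_0 ≤ H be a subgroup whose order t is a prime that is a primitive prime divisor of p^n - 1 (i.e., t divides p^n - 1 but not p^j - 1 for 1 ≤ j < n). Then C_H(T_0) = H ∩ Γ_0(V) = Fit(H), the Fitting subgroup of H. -/

import Mathlib

/-- The multiplicative group structure on `AddAut A` (composition), as in the older Mathlib. -/
instance AddAut.groupCompOld (A : Type*) [Add A] : Group (AddAut A) where
  mul g h := AddEquiv.trans h g
  one := AddEquiv.refl _
  inv := AddEquiv.symm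
  mul_assoc _ _ _ := rfl
  one_mul _ := rfl
  mul_one _ := rfl
  inv_mul_cancel := AddEquiv.self_trans_symm

@[simp]
theorem AddAut.mul_apply_old {A : Type*} [Add A] (e₁ e₂ : AddAut A) (m : A) :
    (e₁ * e₂) m = e₁ (e₂ m) :=
  rfl

@[simp]
theorem AddAut.one_apply_old {A : Type*} [Add A] (m : A) : (1 : AddAut A) m = m :=
  rfl

@[simp]
theorem AddAut.inv_apply_old {A : Type*} [Add A] (e : AddAut A) (m : A) : e⁻¹ m = e.symm m :=
  rfl

/-- The subgroup of `AddAut F` given by multiplications by nonzero field elements,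
i.e. `Γ₀(F)`. -/
def Gamma0 (F : Type) [Field F] : Subgroup (AddAut F) where
  carrier := {f | ∃ a : Fˣ, ∀ x, f x = a * x}
  one_mem' := ⟨1, by simp⟩
  mul_mem' := by
    rintro f g ⟨a, ha⟩ ⟨b, hb⟩
    exact ⟨a * b, fun x => by simp [AddAut.mul_apply_old, ha, hb, mul_assoc]⟩
  inv_mem' := by
    rintro f ⟨a, ha⟩
    refine ⟨a⁻¹, fun x => ?_⟩
    have h1 : f (f⁻¹ x) = x := by
      have : (f * f⁻¹) x = x := by rw [mul_inv_cancel]; rfl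
      simpa [AddAut.mul_apply_old] using this
    have h2 := ha (f⁻¹ x)
    rw [h1] at h2
    have h3 := congrArg (fun y => ((a⁻¹ : Fˣ) : F) * y) h2
    simp only [Units.inv_mul_cancel_left] at h3
    exact h3.symm
  
/-- The semilinear group `Γ(F)` of maps `x ↦ a * σ x` for `a` a nonzero element and
`σ` a field automorphism, as a subgroup of `AddAut F`. -/
def Gammal (F : Type) [Field F] : Subgroup (AddAut F) where
  carrier := {f | ∃ (a : Fˣ) (σ : F ≃+* F), ∀ x, f x = a * σ x}
  one_mem' := ⟨1, RingEquiv.refl F, by simp⟩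
  mul_mem' := by
    rintro f g ⟨a, σ, ha⟩ ⟨b, τ, hb⟩
    refine ⟨a * Units.map σ.toMonoidHom b, τ.trans σ, fun x => ?_⟩
    simp [AddAut.mul_apply_old, ha, hb, map_mul, mul_assoc]
  inv_mem' := by
    rintro f ⟨a, σ, ha⟩
    refine ⟨Units.map σ.symm.toMonoidHom a⁻¹, σ.symm, fun x => ?_⟩
    have h1 : f (f⁻¹ x) = x := by
      have : (f * f⁻¹) x = x := by rw [mul_inv_cancel]; rfl
      simpa [AddAut.mul_apply_old] using this
    have h2 := ha (f⁻¹ x)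
    rw [h1] at h2
    have h3 : σ (f⁻¹ x) = (a⁻¹ : Fˣ) * x := by
      have h4 := congrArg (fun y => ((a⁻¹ : Fˣ) : F) * y) h2
      simp only [Units.inv_mul_cancel_left] at h4
      exact h4.symm
    have h4 : (f⁻¹ : AddAut F) x = σ.symm ((a⁻¹ : Fˣ) * x) := by
      rw [← h3]; simp
    rw [h4]
    simp [map_mul]

/-- The Fitting subgroup: the join of all nilpotent normal subgroups. -/
def fittingSubgroup (G : Type) [Group G] : Subgroup G :=
  ⨆ (N : Subgroup G) (_ : N.Normal) (_ : Group.IsNilpotent N), N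

open scoped commutatorElement

section MuLemmas

variable {E : Type} [Field E]

/-- Multiplication by a unit, as an additive automorphism. -/
def muHom (E : Type) [Field E] : Eˣ →* AddAut E :=
  { toFun := fun u => DistribMulAction.toAddEquiv (G := Eˣ) (A := E) u
    map_one' := AddEquiv.ext fun x => one_smul Eˣ x
    map_mul' := fun u v => AddEquiv.ext fun x => mul_smul u v x }

lemma muHom_apply (u : Eˣ) (x : E) : muHom E u x = u * x := rfl

lemma muHom_injective : Function.Injective (muHom E) := by
  intro u v h
  have h1 := congrArg (fun f : AddAut E => f 1) h
  simp only [muHom_apply, mul_one] at h1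
  exact Units.ext h1

lemma mem_Gamma0_iff {f : AddAut E} :
    f ∈ Gamma0 E ↔ ∃ a : Eˣ, ∀ x, f x = a * x := Iff.rfl

lemma mem_Gammal_iff {f : AddAut E} :
    f ∈ Gammal E ↔ ∃ (a : Eˣ) (σ : E ≃+* E), ∀ x, f x = a * σ x := Iff.rfl

lemma muHom_mem_Gamma0 (u : Eˣ) : muHom E u ∈ Gamma0 E :=
  mem_Gamma0_iff.mpr ⟨u, fun x => rfl⟩

lemma exists_muHom {f : AddAut E} (hf : f ∈ Gamma0 E) : ∃ u : Eˣ, f = muHom E u := by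
  obtain ⟨u, hu⟩ := mem_Gamma0_iff.mp hf
  exact ⟨u, AddEquiv.ext hu⟩

lemma inv_apply_of_rep {g : AddAut E} {b : Eˣ} {σ : E ≃+* E}
    (hg : ∀ x, g x = b * σ x) (x : E) : g⁻¹ x = σ.symm ((b⁻¹ : Eˣ) * x) := by
  apply g.injective
  rw [AddAut.inv_apply_old, AddEquiv.apply_symm_apply, hg, RingEquiv.apply_symm_apply, Units.mul_inv_cancel_left]

lemma conj_muHom {g : AddAut E} {b : Eˣ} {σ : E ≃+* E}
    (hg : ∀ x, g x = b * σ x) (u : Eˣ) :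
    g * muHom E u * g⁻¹ = muHom E (Units.map σ.toMonoidHom u) := by
  apply AddEquiv.ext; intro x
  simp only [AddAut.mul_apply_old, muHom_apply, Units.coe_map, MonoidHom.coe_coe]
  rw [inv_apply_of_rep hg, hg, map_mul, RingEquiv.apply_symm_apply,
    mul_left_comm, Units.mul_inv_cancel_left]
  rfl

lemma commutator_g_mu {g : AddAut E} {b : Eˣ} {σ : E ≃+* E}
    (hg : ∀ x, g x = b * σ x) (u : Eˣ) :
    ⁅g, muHom E u⁆ = muHom E (Units.map σ.toMonoidHom u * u⁻¹) := by
  rw [commutatorElement_def, ← map_inv]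
  rw [conj_muHom hg u, ← map_mul]

lemma commutator_mu_g {g : AddAut E} {b : Eˣ} {σ : E ≃+* E}
    (hg : ∀ x, g x = b * σ x) (u : Eˣ) :
    ⁅muHom E u, g⁆ = muHom E (u * Units.map σ.toMonoidHom u⁻¹) := by
  have h : ⁅muHom E u, g⁆ = muHom E u * (g * muHom E u⁻¹ * g⁻¹) := by
    rw [commutatorElement_def, map_inv]; group
  rw [h, conj_muHom hg, ← map_mul]

lemma pow_rep {g : AddAut E} {b : Eˣ} {σ : E ≃+* E} (hg : ∀ x, g x = b * σ x) :
    ∀ k : ℕ, ∃ c : E, ∀ x, (g ^ k) x = c * (σ ^ k) x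
  | 0 => ⟨1, fun x => by rw [pow_zero, pow_zero, one_mul, AddAut.one_apply_old]; rfl⟩
  | (k + 1) => by
    obtain ⟨c, hc⟩ := pow_rep hg k
    refine ⟨c * (σ ^ k) (b : E), fun x => ?_⟩
    rw [pow_succ, AddAut.mul_apply_old, hg, hc, map_mul]
    have h2 : (σ ^ (k + 1)) x = (σ ^ k) (σ x) := by rw [pow_succ]; rfl
    rw [h2, mul_assoc]

end MuLemmas

section GFLemmas

variable {p n t : ℕ} [Fact p.Prime]

lemma ppd_not_dvd (hp : p.Prime) (hn : 0 < n) (ht : t.Prime)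
    (htd : t ∣ p ^ n - 1) (hppd : ∀ j, 1 ≤ j → j < n → ¬ t ∣ p ^ j - 1) : ¬ t ∣ n := by
  haveI : Fact t.Prime := ⟨ht⟩
  have hp1 : ∀ j : ℕ, 1 ≤ p ^ j := fun j => Nat.one_le_pow _ _ hp.pos
  have hiff : ∀ j : ℕ, t ∣ p ^ j - 1 ↔ (p : ZMod t) ^ j = 1 := by
    intro j
    rw [← ZMod.natCast_eq_zero_iff, Nat.cast_sub (hp1 j), Nat.cast_pow,
      Nat.cast_one, sub_eq_zero, eq_comm]
  have htp : ¬ t ∣ p := by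
    intro h
    have h2 : t ∣ p ^ n := dvd_pow h hn.ne'
    have h3 := Nat.dvd_sub h2 htd
    rw [Nat.sub_sub_self (hp1 n)] at h3
    exact ht.one_lt.ne' (Nat.dvd_one.mp h3)
  have hcop : Nat.Coprime p t := Nat.coprime_comm.mp (ht.coprime_iff_not_dvd.mpr htp)
  set π : (ZMod t)ˣ := ZMod.unitOfCoprime p hcop with hπdef
  have hπ : (π : ZMod t) = (p : ZMod t) := ZMod.coe_unitOfCoprime p hcop
  have hπn : π ^ n = 1 := by
    apply Units.ext
    rw [Units.val_pow_eq_pow_val, hπ, Units.val_one, ← hiff n]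
    exact htd
  have hord_dvd : orderOf π ∣ n := orderOf_dvd_of_pow_eq_one hπn
  have hordpos : 0 < orderOf π := orderOf_pos π
  have hord_n : orderOf π = n := by
    by_contra hne
    have hlt : orderOf π < n := lt_of_le_of_ne (Nat.le_of_dvd hn hord_dvd) hne
    refine hppd (orderOf π) hordpos hlt ?_
    rw [hiff, ← hπ, ← Units.val_pow_eq_pow_val, pow_orderOf_eq_one, Units.val_one]
  intro hdvd
  have h1 : orderOf π ∣ Fintype.card (ZMod t)ˣ := orderOf_dvd_card
  rw [hord_n, ZMod.card_units t] at h1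
  have ht2 := ht.two_le
  have h2 : n ≤ t - 1 := Nat.le_of_dvd (by omega) h1
  have h3 : t ≤ n := Nat.le_of_dvd hn hdvd
  omega

lemma fixed_ringEquiv_eq_refl (hn : 0 < n) (ht : t.Prime)
    (hppd : ∀ j, 1 ≤ j → j < n → ¬ t ∣ p ^ j - 1)
    (σ : GaloisField p n ≃+* GaloisField p n) (a : (GaloisField p n)ˣ)
    (ha : orderOf a = t) (hfix : σ (a : GaloisField p n) = a) :
    σ = RingEquiv.refl (GaloisField p n) := by
  by_contra hσ
  have hp : p.Prime := Fact.out
  set F := GaloisField p n with hFdef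
  let K : Subfield F :=
    { carrier := {x | σ x = x}
      zero_mem' := map_zero σ
      one_mem' := map_one σ
      add_mem' := fun {x y} hx hy => by
        simp only [Set.mem_setOf_eq, map_add] at *
        rw [hx, hy]
      mul_mem' := fun {x y} hx hy => by
        simp only [Set.mem_setOf_eq, map_mul] at *
        rw [hx, hy]
      neg_mem' := fun {x} hx => by
        simp only [Set.mem_setOf_eq, map_neg] at *
        rw [hx]
      inv_mem' := fun x hx => by
        simp only [Set.mem_setOf_eq, map_inv₀] at *
        rw [hx] }
  have hmemK : ∀ y : F, y ∈ K ↔ σ y = y := fun y => Iff.rfl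
  have hcardF : Nat.card F = p ^ n := GaloisField.card p n hn.ne'
  haveI : Fintype F := Fintype.ofFinite F
  haveI : Fintype K := Fintype.ofFinite K
  set m := Module.finrank K F with hmdef
  have hm : Nat.card F = Nat.card K ^ m := by
    rw [Nat.card_eq_fintype_card, Nat.card_eq_fintype_card (α := K)]
    exact Module.card_eq_pow_finrank
  have hq2 : 2 ≤ Nat.card K := Finite.one_lt_card_iff_nontrivial.mpr inferInstance
  -- m ≥ 2
  have hxne : ∃ x : F, σ x ≠ x := by
    by_contra h
    push_neg at h
    exact hσ (RingEquiv.ext h)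
  obtain ⟨x0, hx0⟩ := hxne
  have hclt : Nat.card K < Nat.card F := by
    have : ¬ x0 ∈ K := fun h => hx0 ((hmemK x0).mp h)
    exact Finite.card_subtype_lt this
  have hm0 : m ≠ 0 := by
    intro h
    rw [h, pow_zero] at hm
    omega
  have hm2 : 2 ≤ m := by
    rcases Nat.lt_or_ge m 2 with h | h
    · interval_cases m
      · exact absurd rfl hm0
      · rw [pow_one] at hm; omega
    · exact h
  -- card K = p ^ d
  have hdvd : Nat.card K ∣ p ^ n := by
    have h1 : Nat.card K ∣ Nat.card K ^ m := dvd_pow_self _ hm0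
    rw [← hm, hcardF] at h1
    exact h1
  obtain ⟨d, hdn, hqd⟩ := (Nat.dvd_prime_pow hp).mp hdvd
  have hd1 : 1 ≤ d := by
    rcases Nat.eq_zero_or_pos d with h | h
    · rw [h, pow_zero] at hqd; omega
    · exact h
  have hn_eq : n = d * m := by
    have h1 : p ^ (d * m) = p ^ n := by
      rw [pow_mul, ← hqd, ← hm, hcardF]
    exact (Nat.pow_right_injective hp.two_le h1).symm
  have hdlt : d < n := by
    have : d * 2 ≤ d * m := Nat.mul_le_mul_left d hm2
    omega
  -- the unit of K of order t
  have haK : (a : F) ∈ K := hfix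
  have ha0 : (⟨(a : F), haK⟩ : K) ≠ 0 := by
    intro h
    exact a.ne_zero (congrArg Subtype.val h)
  set u : Kˣ := Units.mk0 _ ha0 with hudef
  have hat : (a : F) ^ t = 1 := by
    rw [← Units.val_pow_eq_pow_val, ← ha, pow_orderOf_eq_one, Units.val_one]
  have hut : u ^ t = 1 := by
    rw [Units.ext_iff, Units.val_pow_eq_pow_val, Units.val_one, Subtype.ext_iff,
      SubmonoidClass.coe_pow, OneMemClass.coe_one]
    exact hat
  have hu1 : u ≠ 1 := by
    intro h
    have h1 : (a : F) = 1 := congrArg (fun v : Kˣ => ((v : K) : F)) h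
    have h2 : a = 1 := Units.ext h1
    rw [h2, orderOf_one] at ha
    have := ht.two_le
    omega
  have huord : orderOf u = t := by
    rcases ht.eq_one_or_self_of_dvd _ (orderOf_dvd_of_pow_eq_one hut) with h | h
    · exact absurd (orderOf_eq_one_iff.mp h) hu1
    · exact h
  have htdvd : t ∣ p ^ d - 1 := by
    have h1 : orderOf u ∣ Nat.card Kˣ := orderOf_dvd_natCard u
    rw [huord, Nat.card_units] at h1
    rwa [hqd] at h1
  exact hppd d hd1 hdlt htdvd

set_option maxHeartbeats 1000000 in
lemma ringEquiv_refl_of_pow_prime (hn : 0 < n) (ht : t.Prime) (htn : ¬ t ∣ n)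
    (σ : GaloisField p n ≃+* GaloisField p n) (hσt : σ ^ t = 1) :
    σ = RingEquiv.refl (GaloisField p n) := by
  haveI : Fintype (GaloisField p n) := Fintype.ofFinite _
  have hcomm : ∀ x : ZMod p, σ (algebraMap (ZMod p) (GaloisField p n) x)
      = algebraMap (ZMod p) (GaloisField p n) x := by
    intro x
    exact RingHom.congr_fun
      (RingHom.ext_zmod ((σ : GaloisField p n →+* GaloisField p n).comp
        (algebraMap (ZMod p) (GaloisField p n))) (algebraMap (ZMod p) (GaloisField p n))) x
  set σ' : GaloisField p n ≃ₐ[ZMod p] GaloisField p n := AlgEquiv.ofRingEquiv (f := σ) hcomm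
    with hσ'def
  have hcoe : ∀ (k : ℕ) (x : GaloisField p n), (σ' ^ k) x = (σ ^ k) x := by
    intro k
    induction k with
    | zero => intro x; rfl
    | succ k ih =>
      intro x
      rw [pow_succ, pow_succ]
      show (σ' ^ k) (σ' x) = (σ ^ k) (σ x)
      rw [ih]
      rfl
  have hσ't : σ' ^ t = 1 := by
    apply AlgEquiv.ext
    intro x
    rw [hcoe t x, hσt]
    rfl
  have hdvd1 : orderOf σ' ∣ t := orderOf_dvd_of_pow_eq_one hσ't
  have hcardA : Fintype.card (GaloisField p n ≃ₐ[ZMod p] GaloisField p n) = n := by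
    rw [← Nat.card_eq_fintype_card, IsGalois.card_aut_eq_finrank, GaloisField.finrank p hn.ne']
  have hdvd2 : orderOf σ' ∣ n := by
    have h0 : orderOf σ' ∣ Fintype.card (GaloisField p n ≃ₐ[ZMod p] GaloisField p n) :=
      orderOf_dvd_card
    rwa [hcardA] at h0
  have h1 : orderOf σ' = 1 := by
    rcases ht.eq_one_or_self_of_dvd _ hdvd1 with h | h
    · exact h
    · rw [h] at hdvd2; exact absurd hdvd2 htn
  have h2 : σ' = 1 := orderOf_eq_one_iff.mp h1
  apply RingEquiv.ext
  intro x
  have h3 := congrArg (fun e : GaloisField p n ≃ₐ[ZMod p] GaloisField p n => e x) h2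
  have h4 : σ' x = x := by simpa using h3
  exact h4

end GFLemmas
set_option maxHeartbeats 1000000 in
/-- Lemma 3.7 (primitive prime divisors and semilinear groups). -/
theorem stmt_10 (p n t : ℕ) [Fact p.Prime] (hn : 0 < n)
    (H T0 : Subgroup (AddAut (GaloisField p n)))
    (hH : H ≤ Gammal (GaloisField p n)) (hT : T0 ≤ H)
    (ht : t.Prime) (hcard : Nat.card T0 = t)
    (htd : t ∣ p ^ n - 1) (hppd : ∀ j, 1 ≤ j → j < n → ¬ t ∣ p ^ j - 1) :
    H ⊓ Subgroup.centralizer (T0 : Set (AddAut (GaloisField p n)))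
        = H ⊓ Gamma0 (GaloisField p n) ∧
    H ⊓ Subgroup.centralizer (T0 : Set (AddAut (GaloisField p n)))
        = Subgroup.map H.subtype (fittingSubgroup H) := by
  have hp : p.Prime := Fact.out
  set F := GaloisField p n with hFdef
  have htn : ¬ t ∣ n := ppd_not_dvd hp hn ht htd hppd
  -- order of elements of T0 divides t
  have horder : ∀ y : AddAut F, y ∈ T0 → orderOf y ∣ t := by
    intro y hy
    have h1 : orderOf (⟨y, hy⟩ : T0) ∣ Nat.card T0 := orderOf_dvd_natCard _
    rw [hcard] at h1
    rwa [Subgroup.orderOf_mk] at h1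
  -- every element of T0 lies in Gamma0
  have hT0sub : ∀ y : AddAut F, y ∈ T0 → y ∈ Gamma0 F := by
    intro y hy
    obtain ⟨b, τ, hrep⟩ := mem_Gammal_iff.mp (hH (hT hy))
    have hyt : y ^ t = 1 := by
      have := horder y hy
      exact orderOf_dvd_iff_pow_eq_one.mp this
    obtain ⟨c, hc⟩ := pow_rep hrep t
    have hc1 : c = 1 := by
      have h1 := hc 1
      rw [hyt, AddAut.one_apply_old, map_one, mul_one] at h1
      exact h1.symm
    have hτt : τ ^ t = 1 := by
      apply RingEquiv.ext
      intro x
      have h1 := hc x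
      rw [hyt, AddAut.one_apply_old, hc1, one_mul] at h1
      exact h1.symm
    have hτ := ringEquiv_refl_of_pow_prime hn ht htn τ hτt
    refine mem_Gamma0_iff.mpr ⟨b, fun x => ?_⟩
    rw [hrep x, hτ]
    rfl
  -- pick a nontrivial element s of T0
  haveI hfin : Finite T0 := Nat.finite_of_card_ne_zero (by rw [hcard]; exact ht.pos.ne')
  haveI : Nontrivial T0 := Finite.one_lt_card_iff_nontrivial.mp (by rw [hcard]; exact ht.one_lt)
  obtain ⟨y0, hy0⟩ := exists_ne (1 : T0)
  set s : AddAut F := (y0 : AddAut F) with hsdef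
  have hsT : s ∈ T0 := y0.2
  have hsH : s ∈ H := hT hsT
  have hs1 : s ≠ 1 := by
    intro h
    exact hy0 (Subtype.ext h)
  have hsord : orderOf s = t := by
    rcases ht.eq_one_or_self_of_dvd _ (horder s hsT) with h | h
    · exact absurd (orderOf_eq_one_iff.mp h) hs1
    · exact h
  obtain ⟨aμ, hsmu⟩ := exists_muHom (hT0sub s hsT)
  have haord : orderOf aμ = t := by
    rw [← hsord, hsmu, orderOf_injective (muHom F) muHom_injective]
  -- first equality
  have e1 : H ⊓ Subgroup.centralizer (T0 : Set (AddAut F)) = H ⊓ Gamma0 F := by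
    apply le_antisymm
    · rintro x ⟨hxH, hxc⟩
      refine ⟨hxH, ?_⟩
      obtain ⟨b, σ, hrep⟩ := mem_Gammal_iff.mp (hH hxH)
      have hcomm : s * x = x * s := (Subgroup.mem_centralizer_iff.mp hxc) s hsT
      have h1 : (s * x) (1 : F) = (x * s) (1 : F) := by rw [hcomm]
      have hL : (s * x) (1 : F) = aμ * b := by
        rw [AddAut.mul_apply_old, hrep, map_one, mul_one, hsmu, muHom_apply]
      have hR : (x * s) (1 : F) = b * σ aμ := by
        rw [AddAut.mul_apply_old, hsmu, muHom_apply, mul_one, hrep]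
      have hfix : σ (aμ : F) = aμ := by
        rw [hL, hR] at h1
        have h2 : (b : F) * σ aμ = (b : F) * aμ := by
          rw [← h1, mul_comm]
        exact mul_left_cancel₀ b.ne_zero h2
      have hσ := fixed_ringEquiv_eq_refl hn ht hppd σ aμ haord hfix
      refine mem_Gamma0_iff.mpr ⟨b, fun z => ?_⟩
      rw [hrep z, hσ]
      rfl
    · rintro x ⟨hxH, hx0⟩
      refine ⟨hxH, Subgroup.mem_centralizer_iff.mpr ?_⟩
      intro y hy
      obtain ⟨u, rfl⟩ := exists_muHom hx0
      obtain ⟨v, rfl⟩ := exists_muHom (hT0sub y hy)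
      rw [← map_mul, ← map_mul, mul_comm]
  -- every nilpotent normal subgroup of H maps into Gamma0
  have hnilp : ∀ N : Subgroup H, N.Normal → Group.IsNilpotent N →
      ∀ x : H, x ∈ N → (x : AddAut F) ∈ Gamma0 F := by
    intro N hNn hNnil x hxN
    obtain ⟨b, τ, hrep⟩ := mem_Gammal_iff.mp (hH x.2)
    by_cases hτ : τ = RingEquiv.refl F
    · refine mem_Gamma0_iff.mpr ⟨b, fun z => ?_⟩
      rw [hrep z, hτ]
      rfl
    exfalso
    set g : AddAut F := (x : AddAut F) with hgdef
    have hτfix : ∀ w : Fˣ, orderOf w = t → Units.map τ.toMonoidHom w = w → False := by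
      intro w hw hfw
      apply hτ
      refine fixed_ringEquiv_eq_refl hn ht hppd τ w hw ?_
      exact congrArg Units.val hfw
    -- the recursively defined units
    set c : Fˣ := Units.map τ.toMonoidHom aμ * aμ⁻¹ with hcdef
    set u : ℕ → Fˣ := fun k => Nat.rec c (fun _ w => w * Units.map τ.toMonoidHom w⁻¹) k
      with hudef
    have hu0 : u 0 = c := rfl
    have husucc : ∀ k, u (k + 1) = u k * Units.map τ.toMonoidHom (u k)⁻¹ := fun k => rfl
    have hct : c ^ t = 1 := by
      have h1 : (aμ : Fˣ) ^ t = 1 := by rw [← haord, pow_orderOf_eq_one]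
      rw [hcdef, mul_pow, inv_pow, ← map_pow, h1, map_one, inv_one, mul_one]
    have hut : ∀ k, (u k) ^ t = 1 := by
      intro k
      induction k with
      | zero => exact hct
      | succ k ih =>
        rw [husucc, mul_pow, ← map_pow, inv_pow, ih, inv_one, map_one, mul_one]
    have hune : ∀ k, u k ≠ 1 := by
      intro k
      induction k with
      | zero =>
        intro h
        rw [hu0, hcdef, mul_inv_eq_one] at h
        exact hτfix aμ haord h
      | succ k ih =>
        intro h
        rw [husucc, map_inv, mul_inv_eq_one] at h
        have hko : orderOf (u k) = t := by
          rcases ht.eq_one_or_self_of_dvd _ (orderOf_dvd_of_pow_eq_one (hut k)) with h2 | h2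
          · exact absurd (orderOf_eq_one_iff.mp h2) ih
          · exact h2
        exact hτfix (u k) hko h.symm
    -- iterated commutators in N
    set γ : H := x with hγdef
    set ς : H := ⟨s, hsH⟩ with hςdef
    have hγN : γ ∈ N := hxN
    set γ' : N := ⟨γ, hγN⟩ with hγ'def
    have hcom0 : ⁅γ, ς⁆ ∈ N := by
      have h1 : ⁅γ, ς⁆ = γ * (ς * γ⁻¹ * ς⁻¹) := by
        rw [commutatorElement_def]; group
      rw [h1]
      exact N.mul_mem hγN (hNn.conj_mem γ⁻¹ (N.inv_mem hγN) ς)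
    set η : ℕ → N := fun k => Nat.rec (⟨⁅γ, ς⁆, hcom0⟩ : N) (fun _ w => ⁅w, γ'⁆) k with hηdef
    have hη0 : η 0 = ⟨⁅γ, ς⁆, hcom0⟩ := rfl
    have hηsucc : ∀ k, η (k + 1) = ⁅η k, γ'⁆ := fun k => rfl
    have hηlcs : ∀ k, η k ∈ (⊤ : Subgroup N).lowerCentralSeries k := by
      intro k
      induction k with
      | zero => exact Subgroup.mem_top _
      | succ k ih =>
        rw [hηsucc, lowerCentralSeries_succ]
        exact Subgroup.commutator_mem_commutator ih (Subgroup.mem_top γ')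
    have hημ : ∀ k, ((η k : H) : AddAut F) = muHom F (u k) := by
      intro k
      induction k with
      | zero =>
        show ((⁅γ, ς⁆ : ↥H) : AddAut F) = muHom F c
        have h1 : ((⁅γ, ς⁆ : ↥H) : AddAut F) = ⁅g, s⁆ := rfl
        rw [h1, hsmu, commutator_g_mu hrep aμ, hcdef]
      | succ k ih =>
        show (((⁅η k, γ'⁆ : ↥N) : ↥H) : AddAut F) = muHom F (u (k + 1))
        have h1 : (((⁅η k, γ'⁆ : ↥N) : ↥H) : AddAut F) = ⁅((η k : ↥H) : AddAut F), g⁆ := rfl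
        rw [h1, ih, commutator_mu_g hrep (u k), husucc]
    obtain ⟨KK, hKK⟩ := nilpotent_iff_lowerCentralSeries.mp hNnil
    have hηK : η KK = 1 := by
      have := hηlcs KK
      rw [hKK] at this
      exact Subgroup.mem_bot.mp this
    have huK : muHom F (u KK) = 1 := by
      rw [← hημ KK, hηK]
      rfl
    have : u KK = 1 := muHom_injective (by rw [huK, map_one])
    exact hune KK this
  -- second equality
  have e2 : Subgroup.map H.subtype (fittingSubgroup H) = H ⊓ Gamma0 F := by
    apply le_antisymm
    · rw [Subgroup.map_le_iff_le_comap]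
      show (⨆ (N : Subgroup H) (_ : N.Normal) (_ : Group.IsNilpotent N), N) ≤ _
      refine iSup_le fun N => iSup_le fun hNn => iSup_le fun hNnil => ?_
      intro x hx
      refine Subgroup.mem_comap.mpr (Subgroup.mem_inf.mpr ⟨x.2, ?_⟩)
      exact hnilp N hNn hNnil x hx
    · rintro x ⟨hxH, hx0⟩
      refine ⟨⟨x, hxH⟩, ?_, rfl⟩
      set N0 : Subgroup H := (Gamma0 F).comap H.subtype with hN0def
      have hN0norm : N0.Normal := by
        constructor
        intro m hm h
        obtain ⟨u, hu⟩ := exists_muHom (Subgroup.mem_comap.mp hm)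
        have hu' : ((m : ↥H) : AddAut F) = muHom F u := hu
        obtain ⟨b, σ, hrep⟩ := mem_Gammal_iff.mp (hH h.2)
        refine Subgroup.mem_comap.mpr ?_
        show ((h * m * h⁻¹ : ↥H) : AddAut F) ∈ Gamma0 F
        have hcoe : ((h * m * h⁻¹ : ↥H) : AddAut F)
            = (h : AddAut F) * ((m : ↥H) : AddAut F) * (h : AddAut F)⁻¹ := rfl
        rw [hcoe, hu', conj_muHom hrep u]
        exact muHom_mem_Gamma0 _
      have hN0comm : ∀ a b : N0, a * b = b * a := by
        intro a b
        apply Subtype.ext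
        apply Subtype.ext
        obtain ⟨ua, hua⟩ := exists_muHom (Subgroup.mem_comap.mp a.2)
        obtain ⟨ub, hub⟩ := exists_muHom (Subgroup.mem_comap.mp b.2)
        have hua' : (((a : ↥H)) : AddAut F) = muHom F ua := hua
        have hub' : (((b : ↥H)) : AddAut F) = muHom F ub := hub
        show (((a : ↥H)) : AddAut F) * (((b : ↥H)) : AddAut F)
            = (((b : ↥H)) : AddAut F) * (((a : ↥H)) : AddAut F)
        rw [hua', hub', ← map_mul, ← map_mul, mul_comm]
      letI : CommGroup N0 :=
        { (inferInstance : Group N0) with mul_comm := hN0comm }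
      have hN0nil : Group.IsNilpotent N0 := CommGroup.isNilpotent
      have hle : N0 ≤ fittingSubgroup H :=
        le_iSup_of_le N0 (le_iSup_of_le hN0norm (le_iSup_of_le hN0nil le_rfl))
      exact hle (Subgroup.mem_comap.mpr hx0)
  exact ⟨e1, e1.trans e2.symm⟩
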